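/- For $\alpha > 0$ and $0 \leq \xi < 1$, the Pitman-Yor partition probabilities $P(A) = \frac{\prod_{k=0}^{s-1}(\alpha + \xi k)}{\alpha^{(n)}} \prod_{i=1}^s |(|A_i| - 1) \ominus \xi|!$ sum to $1$ over all partitions $A$ of $[n]$, where $|c \ominus \xi|! = (1-\xi)(2-\xi)\cdots(c-\xi)$ with $|0 \ominus \xi|! = 1$ and $\alpha^{(n)} = \alpha(\alpha+1)\cdots(\alpha+n-1)$. -/

import Mathlib

open scoped Classical

/-- `P` is a partition of `Fin n`: no empty block, and every element lies in a unique block. -/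
def IsPartition {n : ℕ} (P : Finset (Finset (Fin n))) : Prop :=
  (∅ ∉ P) ∧ ∀ i : Fin n, ∃! b, b ∈ P ∧ i ∈ b

/-- All set partitions of `[n]`. -/
noncomputable def allPartitions (n : ℕ) : Finset (Finset (Finset (Fin n))) :=
  Finset.univ.filter (fun P => IsPartition P)

/-- The rising factorial `α^{(n)} = α(α+1)⋯(α+n-1)`. -/
noncomputable def ascF (α : ℝ) (n : ℕ) : ℝ := ∏ i ∈ Finset.range n, (α + i)

/-- The discounted factorial `|c ⊖ ξ|! = (1-ξ)(2-ξ)⋯(c-ξ)`, with `|0 ⊖ ξ|! = 1`. -/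
noncomputable def dfact (ξ : ℝ) (c : ℕ) : ℝ := ∏ i ∈ Finset.range c, ((i : ℝ) + 1 - ξ)

open Finset

namespace PY

variable {n : ℕ}

lemma mem_allPartitions {P : Finset (Finset (Fin n))} :
    P ∈ allPartitions n ↔ IsPartition P := by
  simp [allPartitions]

lemma block_ne_empty {P : Finset (Finset (Fin n))} (hP : IsPartition P)
    {b} (hb : b ∈ P) : b ≠ ∅ := fun h => hP.1 (h ▸ hb)

lemma block_eq {P : Finset (Finset (Fin n))} (hP : IsPartition P)
    {a b : Finset (Fin n)} (ha : a ∈ P) (hb : b ∈ P) {x : Fin n}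
    (hxa : x ∈ a) (hxb : x ∈ b) : a = b := by
  obtain ⟨c, -, hc⟩ := hP.2 x
  rw [hc a ⟨ha, hxa⟩, hc b ⟨hb, hxb⟩]

lemma sum_card {P : Finset (Finset (Fin n))} (hP : IsPartition P) :
    ∑ b ∈ P, b.card = n := by
  have h : P.biUnion id = univ := by
    ext x
    simp only [mem_biUnion, id, mem_univ, iff_true]
    obtain ⟨b, hb, -⟩ := hP.2 x
    exact ⟨b, hb.1, hb.2⟩
  have hd : ∀ a ∈ P, ∀ b ∈ P, a ≠ b → Disjoint (id a) (id b) := by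
    intro a ha b hb hab
    exact disjoint_left.2 fun x hxa hxb => hab (block_eq hP ha hb hxa hxb)
  calc ∑ b ∈ P, b.card = (P.biUnion id).card := (card_biUnion hd).symm
    _ = n := by rw [h, card_univ, Fintype.card_fin]

lemma dfact_zero (ξ : ℝ) : dfact ξ 0 = 1 := by simp [dfact]

lemma dfact_succ (ξ : ℝ) (c : ℕ) : dfact ξ (c + 1) = dfact ξ c * ((c : ℝ) + 1 - ξ) :=
  prod_range_succ _ _

def up (b : Finset (Fin n)) : Finset (Fin (n + 1)) := b.image Fin.castSucc

def down (a : Finset (Fin (n + 1))) : Finset (Fin n) :=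
  univ.filter (fun i => i.castSucc ∈ a)

lemma mem_up {b : Finset (Fin n)} {i : Fin n} : i.castSucc ∈ up b ↔ i ∈ b := by
  simp only [up, mem_image]
  constructor
  · rintro ⟨j, hj, hji⟩; rwa [Fin.castSucc_injective n hji] at hj
  · exact fun h => ⟨i, h, rfl⟩

lemma mem_down {a : Finset (Fin (n + 1))} {i : Fin n} : i ∈ down a ↔ i.castSucc ∈ a := by
  simp [down]

lemma last_not_mem_up (b : Finset (Fin n)) : Fin.last n ∉ up b := by
  simp only [up, mem_image]
  rintro ⟨j, -, hj⟩
  exact absurd hj (Fin.castSucc_lt_last j).ne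

lemma up_injective : Function.Injective (up (n := n)) :=
  Finset.image_injective (Fin.castSucc_injective n)

lemma card_up (b : Finset (Fin n)) : (up b).card = b.card :=
  card_image_of_injective _ (Fin.castSucc_injective n)

lemma up_empty : up (∅ : Finset (Fin n)) = ∅ := rfl

lemma up_eq_empty {b : Finset (Fin n)} : up b = ∅ ↔ b = ∅ := by
  constructor
  · intro h; exact up_injective (by rw [h, up_empty])
  · rintro rfl; rfl

lemma down_up (b : Finset (Fin n)) : down (up b) = b := by
  ext i; rw [mem_down, mem_up]

lemma up_down (a : Finset (Fin (n + 1))) : up (down a) = a.erase (Fin.last n) := by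
  ext j
  refine Fin.lastCases ?_ (fun i => ?_) j
  · simp [last_not_mem_up]
  · rw [mem_up, mem_down, mem_erase]
    simp [(Fin.castSucc_lt_last i).ne]

end PY
namespace PY

variable {n : ℕ}

/-- Build a partition of `Fin (n+1)` from a partition `B` of `Fin n` and a choice `o`:
`o = ∅` means the last element starts a new block; `o ∈ B` means it joins block `o`. -/
def build (B : Finset (Finset (Fin n))) (o : Finset (Fin n)) : Finset (Finset (Fin (n + 1))) :=
  insert (insert (Fin.last n) (up o)) ((B.image up).erase (up o))

def proj (A : Finset (Finset (Fin (n + 1)))) : Finset (Finset (Fin n)) :=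
  (A.image down).erase ∅

def pick (A : Finset (Finset (Fin (n + 1)))) : Finset (Fin n) :=
  univ.filter (fun i => ∃ a ∈ A, Fin.last n ∈ a ∧ i.castSucc ∈ a)

lemma build_isPartition {B : Finset (Finset (Fin n))} (hB : IsPartition B)
    {o : Finset (Fin n)} (ho : o = ∅ ∨ o ∈ B) : IsPartition (build B o) := by
  constructor
  · intro h
    rcases mem_insert.1 h with h | h
    · exact absurd (h ▸ mem_insert_self (Fin.last n) (up o)) (notMem_empty _)
    · obtain ⟨b, hb, hbe⟩ := mem_image.1 (mem_of_mem_erase h)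
      exact block_ne_empty hB hb (up_eq_empty.1 hbe)
  · intro j
    refine Fin.lastCases ?_ (fun i => ?_) j
    · refine ⟨insert (Fin.last n) (up o), ⟨mem_insert_self _ _, mem_insert_self _ _⟩, ?_⟩
      rintro a ⟨ha, hla⟩
      rcases mem_insert.1 ha with rfl | ha
      · rfl
      · obtain ⟨b, -, rfl⟩ := mem_image.1 (mem_of_mem_erase ha)
        exact absurd hla (last_not_mem_up b)
    · obtain ⟨b, ⟨hbB, hib⟩, hbu⟩ := hB.2 i
      by_cases hbo : b = o
      · subst hbo
        refine ⟨insert (Fin.last n) (up b), ⟨mem_insert_self _ _,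
          mem_insert_of_mem (mem_up.2 hib)⟩, ?_⟩
        rintro a ⟨ha, hia⟩
        rcases mem_insert.1 ha with rfl | ha
        · rfl
        · obtain ⟨b', hb', rfl⟩ := mem_image.1 (mem_of_mem_erase ha)
          have : b' = b := hbu b' ⟨hb', mem_up.1 hia⟩
          subst this
          exact absurd rfl (ne_of_mem_erase ha)
      · have hne : up b ≠ up o := fun h => hbo (up_injective h)
        refine ⟨up b, ⟨mem_insert_of_mem (mem_erase.2 ⟨hne, mem_image_of_mem up hbB⟩),
          mem_up.2 hib⟩, ?_⟩
        rintro a ⟨ha, hia⟩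
        rcases mem_insert.1 ha with rfl | ha
        · rcases mem_insert.1 hia with h | h
          · exact absurd h (Fin.castSucc_lt_last i).ne
          · rcases ho with rfl | hoB
            · exact absurd (mem_up.1 h) (notMem_empty i)
            · exact absurd (hbu o ⟨hoB, mem_up.1 h⟩).symm hbo
        · obtain ⟨b', hb', rfl⟩ := mem_image.1 (mem_of_mem_erase ha)
          rw [hbu b' ⟨hb', mem_up.1 hia⟩]

lemma proj_build {B : Finset (Finset (Fin n))} (hB : IsPartition B)
    {o : Finset (Fin n)} (ho : o = ∅ ∨ o ∈ B) : proj (build B o) = B := by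
  have h1 : down (insert (Fin.last n) (up o)) = o := by
    ext i
    rw [mem_down, mem_insert, mem_up]
    simp [(Fin.castSucc_lt_last i).ne]
  have h2 : (build B o).image down = insert o (B.erase o) := by
    rw [build, image_insert, h1, ← image_erase up_injective, image_image]
    simp only [Function.comp_def, down_up, image_id']
  rw [proj, h2]
  rcases ho with rfl | ho
  · rw [erase_insert_eq_erase, erase_eq_of_notMem (fun h => hB.1 (mem_of_mem_erase h)),
      erase_eq_of_notMem hB.1]
  · rw [insert_erase ho, erase_eq_of_notMem hB.1]

end PY
namespace PY

variable {n : ℕ}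

lemma pick_build {B : Finset (Finset (Fin n))} {o : Finset (Fin n)} :
    pick (build B o) = o := by
  ext i
  simp only [pick, mem_filter, mem_univ, true_and]
  constructor
  · rintro ⟨a, ha, hla, hia⟩
    rcases mem_insert.1 ha with rfl | ha
    · rcases mem_insert.1 hia with h | h
      · exact absurd h (Fin.castSucc_lt_last i).ne
      · exact mem_up.1 h
    · obtain ⟨b, -, rfl⟩ := mem_image.1 (mem_of_mem_erase ha)
      exact absurd hla (last_not_mem_up b)
  · intro h
    exact ⟨insert (Fin.last n) (up o), mem_insert_self _ _, mem_insert_self _ _,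
      mem_insert_of_mem (mem_up.2 h)⟩

section Inv

variable {A : Finset (Finset (Fin (n + 1)))} (hA : IsPartition A)

include hA

/-- the block of `A` containing the last element -/
lemma exists_last_block : ∃ a₀ ∈ A, Fin.last n ∈ a₀ ∧
    (∀ a ∈ A, Fin.last n ∈ a → a = a₀) := by
  obtain ⟨a₀, ⟨ha₀, hla₀⟩, hu⟩ := hA.2 (Fin.last n)
  exact ⟨a₀, ha₀, hla₀, fun a ha hla => hu a ⟨ha, hla⟩⟩

lemma proj_isPartition : IsPartition (proj A) := by
  constructor
  · exact notMem_erase _ _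
  · intro i
    obtain ⟨a, ⟨haA, hia⟩, hau⟩ := hA.2 i.castSucc
    refine ⟨down a, ⟨mem_erase.2 ⟨?_, mem_image_of_mem down haA⟩, mem_down.2 hia⟩, ?_⟩
    · intro h
      have := mem_down.2 hia
      rw [h] at this
      exact notMem_empty i this
    · rintro b ⟨hb, hib⟩
      obtain ⟨a', ha', rfl⟩ := mem_image.1 (mem_of_mem_erase hb)
      rw [hau a' ⟨ha', mem_down.1 hib⟩]

lemma pick_eq_down_last : ∀ a₀ ∈ A, Fin.last n ∈ a₀ → pick A = down a₀ := by
  intro a₀ ha₀ hla₀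
  ext i
  simp only [pick, mem_filter, mem_univ, true_and, mem_down]
  constructor
  · rintro ⟨a, ha, hla, hia⟩
    rwa [block_eq hA ha ha₀ hla hla₀] at hia
  · intro h
    exact ⟨a₀, ha₀, hla₀, h⟩

lemma pick_mem : pick A ∈ insert ∅ (proj A) := by
  obtain ⟨a₀, ha₀, hla₀, -⟩ := exists_last_block hA
  rw [pick_eq_down_last hA a₀ ha₀ hla₀]
  by_cases h : down a₀ = ∅
  · rw [h]; exact mem_insert_self _ _
  · exact mem_insert_of_mem (mem_erase.2 ⟨h, mem_image_of_mem down ha₀⟩)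

lemma build_proj_pick : build (proj A) (pick A) = A := by
  obtain ⟨a₀, ha₀, hla₀, hu⟩ := exists_last_block hA
  rw [pick_eq_down_last hA a₀ ha₀ hla₀]
  have h1 : insert (Fin.last n) (up (down a₀)) = a₀ := by
    rw [up_down, insert_erase hla₀]
  have hkey : ∀ a ∈ A, a ≠ a₀ → Fin.last n ∉ a := by
    intro a ha hne hla
    exact hne (hu a ha hla)
  have h2 : ((proj A).image up).erase (up (down a₀)) = A.erase a₀ := by
    ext x
    simp only [mem_erase, mem_image, proj]
    constructor
    · rintro ⟨hxne, b, hb, rfl⟩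
      obtain ⟨hbne, a, haA, rfl⟩ : b ≠ ∅ ∧ ∃ a ∈ A, down a = b := by
        simpa only [mem_erase, mem_image] using hb
      have hne : a ≠ a₀ := fun h => hxne (by rw [h])
      rw [up_down, erase_eq_of_notMem (hkey a haA hne)]
      exact ⟨hne, haA⟩
    · rintro ⟨hne, hxA⟩
      have hlx : Fin.last n ∉ x := hkey x hxA hne
      have hx : up (down x) = x := by rw [up_down, erase_eq_of_notMem hlx]
      refine ⟨?_, down x, ?_, hx⟩
      · intro h
        rw [up_down] at h
        obtain ⟨i, hi⟩ := nonempty_iff_ne_empty.2 (block_ne_empty hA hxA)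
        have hia : i ∈ a₀ := mem_of_mem_erase (h ▸ hi)
        exact hne (block_eq hA hxA ha₀ hi hia)
      · refine ⟨?_, x, hxA, rfl⟩
        intro h
        rw [h, up_empty] at hx
        exact block_ne_empty hA hxA hx.symm
  rw [build, h1, h2, insert_erase ha₀]

end Inv

end PY
namespace PY

noncomputable def W (α ξ : ℝ) {n : ℕ} (A : Finset (Finset (Fin n))) : ℝ :=
  (∏ k ∈ Finset.range A.card, (α + ξ * k)) * ∏ a ∈ A, dfact ξ (a.card - 1)

variable {n : ℕ} {α ξ : ℝ}

lemma notmem_erase_image {B : Finset (Finset (Fin n))} {o : Finset (Fin n)} :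
    insert (Fin.last n) (up o) ∉ (B.image up).erase (up o) := by
  intro h
  obtain ⟨b, -, hb⟩ := mem_image.1 (mem_of_mem_erase h)
  exact last_not_mem_up b (hb ▸ mem_insert_self _ _)

lemma card_build {B : Finset (Finset (Fin n))} (hB : IsPartition B)
    {o : Finset (Fin n)} (ho : o = ∅ ∨ o ∈ B) :
    (build B o).card = if o = ∅ then B.card + 1 else B.card := by
  rw [build, card_insert_of_notMem notmem_erase_image]
  rcases ho with rfl | ho
  · rw [if_pos rfl, up_empty, erase_eq_of_notMem, card_image_of_injective _ up_injective]
    intro h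
    obtain ⟨b, hb, hbe⟩ := mem_image.1 h
    exact block_ne_empty hB hb (up_eq_empty.1 hbe)
  · rw [if_neg (block_ne_empty hB ho), card_erase_of_mem (mem_image_of_mem up ho),
      card_image_of_injective _ up_injective]
    have : 1 ≤ B.card := card_pos.2 ⟨o, ho⟩
    omega

lemma prod_build {B : Finset (Finset (Fin n))} {o : Finset (Fin n)} :
    ∏ a ∈ build B o, dfact ξ (a.card - 1)
      = dfact ξ o.card * ∏ b ∈ B.erase o, dfact ξ (b.card - 1) := by
  rw [build, prod_insert notmem_erase_image, ← image_erase up_injective,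
    prod_image (fun x _ y _ h => up_injective h)]
  congr 1
  · congr 1
    rw [card_insert_of_notMem (last_not_mem_up o), card_up, Nat.add_sub_cancel]
  · exact prod_congr rfl fun b _ => by rw [card_up]

lemma W_build {B : Finset (Finset (Fin n))} (hB : IsPartition B)
    {o : Finset (Fin n)} (ho : o = ∅ ∨ o ∈ B) :
    W α ξ (build B o)
      = (if o = ∅ then α + ξ * B.card else ((o.card : ℝ) - ξ)) * W α ξ B := by
  rw [W, W, card_build hB ho, prod_build]
  rcases ho with rfl | ho
  · rw [if_pos rfl, if_pos rfl, card_empty, dfact_zero, erase_eq_of_notMem hB.1,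
      prod_range_succ]
    ring
  · have hne := block_ne_empty hB ho
    rw [if_neg hne, if_neg hne]
    have hc : 1 ≤ o.card := card_pos.2 (nonempty_iff_ne_empty.2 hne)
    have hd : dfact ξ o.card = dfact ξ (o.card - 1) * ((o.card : ℝ) - ξ) := by
      conv_lhs => rw [show o.card = (o.card - 1) + 1 by omega, dfact_succ]
      congr 2
      push_cast [hc]
      ring
    rw [hd, ← Finset.mul_prod_erase B _ ho]
    ring

lemma fiber_sum {B : Finset (Finset (Fin n))} (hB : IsPartition B) :
    ∑ o ∈ insert ∅ B, W α ξ (build B o) = (α + n) * W α ξ B := by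
  rw [sum_insert hB.1, W_build hB (Or.inl rfl), if_pos rfl]
  have h1 : ∀ b ∈ B, W α ξ (build B b) = ((b.card : ℝ) - ξ) * W α ξ B := by
    intro b hb
    rw [W_build hB (Or.inr hb), if_neg (block_ne_empty hB hb)]
  rw [sum_congr rfl h1, ← sum_mul]
  have h2 : ∑ b ∈ B, ((b.card : ℝ) - ξ) = (n : ℝ) - ξ * B.card := by
    rw [sum_sub_distrib, sum_const, ← Nat.cast_sum, sum_card hB, nsmul_eq_mul]
    ring
  rw [h2]
  ring

lemma allPartitions_zero : allPartitions 0 = {∅} := by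
  ext A
  rw [mem_allPartitions, mem_singleton]
  constructor
  · intro hA
    rw [eq_empty_iff_forall_notMem]
    intro b hb
    exact block_ne_empty hA hb (Finset.eq_empty_of_isEmpty b)
  · rintro rfl
    exact ⟨notMem_empty _, fun i => i.elim0⟩

lemma key (α ξ : ℝ) : ∀ n : ℕ, ∑ A ∈ allPartitions n, W α ξ A = ascF α n := by
  intro n
  induction n with
  | zero => simp [allPartitions_zero, W, ascF]
  | succ n ih =>
    have hbij : ∑ p ∈ (allPartitions n).sigma (fun B => insert ∅ B),
        W α ξ (build p.1 p.2) = ∑ A ∈ allPartitions (n + 1), W α ξ A := by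
      refine sum_nbij' (fun p => build p.1 p.2) (fun A => ⟨proj A, pick A⟩) ?_ ?_ ?_ ?_ ?_
      · rintro ⟨B, o⟩ hp
        obtain ⟨hB, ho⟩ := mem_sigma.1 hp
        rw [mem_allPartitions] at hB ⊢
        exact build_isPartition hB ((mem_insert.1 ho).imp_right id)
      · intro A hA
        rw [mem_allPartitions] at hA
        exact mem_sigma.2 ⟨mem_allPartitions.2 (proj_isPartition hA), pick_mem hA⟩
      · rintro ⟨B, o⟩ hp
        obtain ⟨hB, ho⟩ := mem_sigma.1 hp
        rw [mem_allPartitions] at hB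
        have ho' : o = ∅ ∨ o ∈ B := (mem_insert.1 ho).imp_right id
        exact Sigma.ext (proj_build hB ho') (heq_of_eq pick_build)
      · intro A hA
        rw [mem_allPartitions] at hA
        exact build_proj_pick hA
      · intro p hp
        rfl
    rw [← hbij, sum_sigma]
    have : ∀ B ∈ allPartitions n, ∑ o ∈ insert ∅ B, W α ξ (build B o)
        = (α + n) * W α ξ B := fun B hB => fiber_sum (mem_allPartitions.1 hB)
    rw [sum_congr rfl this, ← mul_sum, ih, ascF, ascF, prod_range_succ]
    ring

end PY

theorem stmt_10 (n : ℕ) (hn : 1 ≤ n) (α ξ : ℝ) (hα : 0 < α) (hξ0 : 0 ≤ ξ) (hξ1 : ξ < 1) :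
    ∑ A ∈ allPartitions n,
      (∏ k ∈ Finset.range A.card, (α + ξ * k)) / ascF α n *
        ∏ a ∈ A, dfact ξ (a.card - 1) = 1 := by
  have hne : ascF α n ≠ 0 := by
    rw [ascF]
    exact ne_of_gt (Finset.prod_pos fun i _ => by positivity)
  have h : ∀ A ∈ allPartitions n,
      (∏ k ∈ Finset.range A.card, (α + ξ * k)) / ascF α n *
        ∏ a ∈ A, dfact ξ (a.card - 1) = PY.W α ξ A / ascF α n := by
    intro A hA
    rw [PY.W]
    ring
  rw [Finset.sum_congr rfl h, ← Finset.sum_div, PY.key α ξ n, div_self hne]
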